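/- Let M be a matroid on a finite ground set E. Then the circuit variety of M equals the union of the matroid variety of M together with the circuit varieties of all minimal matroids strictly above M in the dependency order: V_{C(M)} = V_M ∪ ⋃_{N ∈ min(M)} V_{C(N)}. -/

import Mathlib

open MvPolynomial

/-- The vector of point `i` in a tuple `x ∈ ℂ^{n d}`. -/
def vecs {d n : ℕ} (x : Fin d × Fin n → ℂ) (i : Fin d) : Fin n → ℂ := fun j => x (i, j)

/-- Zariski closure of a subset of affine space. -/
def zarClosure {ι : Type} (S : Set (ι → ℂ)) : Set (ι → ℂ) :=
  {x | ∀ f : MvPolynomial ι ℂ, (∀ y ∈ S, eval y f = 0) → eval x f = 0}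

/-- `x` is a realization of the matroid `M`: linear dependencies match dependent sets. -/
def IsRealization {d n : ℕ} (M : Matroid (Fin d)) (x : Fin d × Fin n → ℂ) : Prop :=
  ∀ S : Set (Fin d), LinearIndependent ℂ (fun i : S => vecs x i.1) ↔ M.Indep S

/-- The realization space `Γ_M`. -/
def realSpace {d : ℕ} (n : ℕ) (M : Matroid (Fin d)) : Set (Fin d × Fin n → ℂ) :=
  {x | IsRealization M x}

/-- The matroid variety `V_M`. -/
def matroidVariety {d : ℕ} (n : ℕ) (M : Matroid (Fin d)) : Set (Fin d × Fin n → ℂ) :=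
  zarClosure (realSpace n M)

/-- The circuit variety `V_{C(M)}`: every dependent set of `M` indexes linearly
dependent vectors. -/
def circuitVariety {d : ℕ} (n : ℕ) (M : Matroid (Fin d)) : Set (Fin d × Fin n → ℂ) :=
  {x | ∀ S : Set (Fin d), M.Dep S → ¬ LinearIndependent ℂ (fun i : S => vecs x i.1)}

/-- Dependency order on matroids: every dependent set of `M` is dependent in `N`. -/
def depLE {d : ℕ} (M N : Matroid (Fin d)) : Prop :=
  ∀ S : Set (Fin d), M.Dep S → N.Dep S

def depLT {d : ℕ} (M N : Matroid (Fin d)) : Prop :=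
  depLE M N ∧ ¬ depLE N M

/-- `N` is a minimal matroid of `M`: a minimal element of `{N : N > M}` in the
dependency order (among matroids on the full ground set `[d]`). -/
def IsMinimalMatroid {d : ℕ} (M N : Matroid (Fin d)) : Prop :=
  N.E = Set.univ ∧ depLT M N ∧
    ∀ N' : Matroid (Fin d), N'.E = Set.univ → depLT M N' → depLE N' N → depLE N N'

section Aux

open Matrix

/-- A family of `k` vectors in `ℂ^n` is linearly independent iff some `k × k` minor of the
associated matrix is nonzero. -/
lemma key_li_iff {k n : ℕ} (w : Fin k → (Fin n → ℂ)) :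
    LinearIndependent ℂ w ↔ ∃ h : Fin k → Fin n, Function.Injective h ∧
      (Matrix.of fun a b => w a (h b)).det ≠ 0 := by
  constructor
  · intro hw
    classical
    set A : Matrix (Fin k) (Fin n) ℂ := Matrix.of w with hA
    have h1 : Fintype.card (Fin k) = Set.finrank ℂ (Set.range w) :=
      linearIndependent_iff_card_eq_finrank_span.mp hw
    have hrank : A.rank = k := by
      rw [Matrix.rank_eq_finrank_span_row]
      have : Set.range A.row = Set.range w := rfl
      rw [this]
      simpa [Set.finrank] using h1.symm
    have hrt : Aᵀ.rank = k := by rw [Matrix.rank_transpose]; exact hrank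
    have hspan : Submodule.span ℂ (Set.range Aᵀ) = ⊤ := by
      apply Submodule.eq_top_of_finrank_eq
      rw [show Set.range Aᵀ = Set.range Aᵀ.row from rfl, ← Matrix.rank_eq_finrank_span_row, hrt]
      simp [Module.finrank_pi]
    obtain ⟨t, hts, htspan, htli⟩ := exists_linearIndependent ℂ (Set.range Aᵀ)
    rw [hspan] at htspan
    haveI : Fintype t := ((Set.finite_range Aᵀ).subset hts).fintype
    have hcard : t.toFinset.card = k := by
      have hc1 := finrank_span_set_eq_card htli
      rw [htspan, finrank_top] at hc1
      simpa using hc1.symm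
    have hcard' : Fintype.card t = k := by rwa [Set.toFinset_card] at hcard
    let e : Fin k ≃ t := (Fintype.equivFinOfCardEq hcard').symm
    have hpre : ∀ b : Fin k, ∃ j : Fin n, Aᵀ j = (e b).1 := fun b => hts (e b).2
    choose h hh using hpre
    refine ⟨h, ?_, ?_⟩
    · intro b b' hb
      have : (e b).1 = (e b').1 := by rw [← hh b, ← hh b', hb]
      exact e.injective (Subtype.ext this)
    · have hcols : LinearIndependent ℂ (fun b : Fin k => (Matrix.of fun a b => w a (h b))ᵀ b) := by
        have : (fun b : Fin k => (Matrix.of fun a b => w a (h b))ᵀ b)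
            = fun b => (e b).1 := by
          funext b
          rw [← hh b]
          rfl
        rw [this]
        exact htli.comp e e.injective
      have := Matrix.linearIndependent_cols_iff_isUnit.mp hcols
      rw [Matrix.isUnit_iff_isUnit_det, isUnit_iff_ne_zero] at this
      exact this
  · rintro ⟨h, hinj, hdet⟩
    have hrows : LinearIndependent ℂ (fun a : Fin k => (Matrix.of fun a b => w a (h b)) a) :=
      Matrix.linearIndependent_rows_iff_isUnit.mpr
        (Matrix.isUnit_iff_isUnit_det _ |>.mpr (isUnit_iff_ne_zero.mpr hdet))
    exact hrows.of_comp (LinearMap.funLeft ℂ ℂ h)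

lemma vec_indep_mono {d n : ℕ} (x : Fin d × Fin n → ℂ) {I J : Set (Fin d)} (hIJ : I ⊆ J)
    (hJ : LinearIndependent ℂ (fun i : J => vecs x i.1)) :
    LinearIndependent ℂ (fun i : I => vecs x i.1) :=
  hJ.comp (Set.inclusion hIJ) (Set.inclusion_injective hIJ)

/-- The matroid of linear dependencies of the tuple `x`. -/
noncomputable def vecMatroid {d n : ℕ} (x : Fin d × Fin n → ℂ) : Matroid (Fin d) :=
  (IndepMatroid.ofFinite (Set.finite_univ)
    (fun S => LinearIndependent ℂ (fun i : S => vecs x i.1))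
    (linearIndependent_empty_type)
    (fun I J hJ hIJ => vec_indep_mono x hIJ hJ)
    (by
      intro I J hI hJ hlt
      by_contra hcon
      push_neg at hcon
      classical
      have hIJ' : ∀ e ∈ J, vecs x e ∈ Submodule.span ℂ (vecs x '' I) := by
        intro e he
        by_cases heI : e ∈ I
        · exact Submodule.subset_span ⟨e, heI, rfl⟩
        · have hni := hcon e he heI
          have := (linearIndepOn_insert (f := vecs x) heI).not.mp hni
          push_neg at this
          exact this hI
      set W := Submodule.span ℂ (vecs x '' I) with hW
      have hJW : LinearIndependent ℂ (fun j : J => (⟨vecs x j.1, hIJ' j.1 j.2⟩ : W)) := by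
        apply LinearIndependent.of_comp W.subtype
        exact hJ
      haveI : Fintype ↥J := (Set.toFinite J).fintype
      haveI : Fintype ↥I := (Set.toFinite I).fintype
      haveI : Fintype ↥(vecs x '' I) := (Set.toFinite _).fintype
      have h1 : Fintype.card ↥J ≤ Module.finrank ℂ W := hJW.fintype_card_le_finrank
      have h2 : Module.finrank ℂ W ≤ (vecs x '' I).toFinset.card := finrank_span_le_card _
      have h3 : (vecs x '' I).ncard ≤ I.ncard := Set.ncard_image_le (Set.toFinite I)
      rw [Set.ncard_eq_toFinset_card'] at h3
      have h4 : J.ncard = Fintype.card ↥J := by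
        rw [Set.ncard_eq_toFinset_card', Set.toFinset_card]
      omega)
    (fun I _ => Set.subset_univ I)).matroid

lemma vecMatroid_indep {d n : ℕ} (x : Fin d × Fin n → ℂ) (S : Set (Fin d)) :
    (vecMatroid x).Indep S ↔ LinearIndependent ℂ (fun i : S => vecs x i.1) := by
  simp [vecMatroid]

lemma vecMatroid_E {d n : ℕ} (x : Fin d × Fin n → ℂ) : (vecMatroid x).E = Set.univ := rfl

instance matroidFinite {d : ℕ} : Finite (Matroid (Fin d)) := by
  apply Finite.of_injective (fun M : Matroid (Fin d) => (M.E, M.Indep))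
  intro M N h
  simp only [Prod.mk.injEq] at h
  exact Matroid.ext_indep h.1 (fun ⦃I⦄ _ => by rw [h.2])

lemma depLE_antisymm {d : ℕ} {M N : Matroid (Fin d)} (hM : M.E = Set.univ)
    (hN : N.E = Set.univ) (h1 : depLE M N) (h2 : depLE N M) : M = N := by
  apply Matroid.ext_indep (by rw [hM, hN])
  intro I _
  constructor
  · intro hI
    by_contra hI'
    have : N.Dep I := ⟨hI', by rw [hN]; exact Set.subset_univ _⟩
    exact ((h2 I this).1) hI
  · intro hI
    by_contra hI'
    have : M.Dep I := ⟨hI', by rw [hM]; exact Set.subset_univ _⟩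
    exact ((h1 I this).1) hI

lemma exists_min_below {d : ℕ} (M N : Matroid (Fin d)) (hN : N.E = Set.univ)
    (hMN : depLT M N) :
    ∃ P : Matroid (Fin d), P.E = Set.univ ∧ depLT M P ∧ depLE P N ∧
      ∀ Q : Matroid (Fin d), Q.E = Set.univ → depLT M Q → depLE Q P → depLE P Q := by
  classical
  let r : Matroid (Fin d) → Matroid (Fin d) → Prop := fun P Q => depLE P Q ∧ ¬ depLE Q P
  haveI : IsTrans (Matroid (Fin d)) r := ⟨by
    rintro a b c ⟨hab, hba⟩ ⟨hbc, hcb⟩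
    refine ⟨fun S hS => hbc S (hab S hS), fun hca => hcb (fun S hS => hab S (hca S hS))⟩⟩
  haveI : IsIrrefl (Matroid (Fin d)) r := ⟨by rintro a ⟨h1, h2⟩; exact h2 h1⟩
  have hwf : WellFounded r := Finite.wellFounded_of_trans_of_irrefl r
  obtain ⟨P, hPT, hmin⟩ := hwf.has_min
    {P : Matroid (Fin d) | P.E = Set.univ ∧ depLT M P ∧ depLE P N}
    ⟨N, hN, hMN, fun S hS => hS⟩
  refine ⟨P, hPT.1, hPT.2.1, hPT.2.2, ?_⟩
  intro Q hQE hMQ hQP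
  by_contra hPQ
  exact hmin Q ⟨hQE, hMQ, fun S hS => hPT.2.2 S (hQP S hS)⟩ ⟨hQP, hPQ⟩

lemma matroidVariety_subset_circuitVariety {d n : ℕ} (M : Matroid (Fin d)) :
    matroidVariety n M ⊆ circuitVariety n M := by
  intro x hx S hS hindep
  classical
  haveI : Fintype ↥S := (Set.toFinite S).fintype
  set k := Fintype.card ↥S with hk
  let e : Fin k ≃ ↥S := (Fintype.equivFin ↥S).symm
  have hw : LinearIndependent ℂ (fun a : Fin k => vecs x (e a).1) :=
    hindep.comp e e.injective
  obtain ⟨h, hinj, hdet⟩ := (key_li_iff _).mp hw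
  let P : MvPolynomial (Fin d × Fin n) ℂ :=
    (Matrix.of fun a b : Fin k => (X ((e a).1, h b) : MvPolynomial (Fin d × Fin n) ℂ)).det
  have hevalP : ∀ y : Fin d × Fin n → ℂ,
      eval y P = (Matrix.of fun a b : Fin k => vecs y (e a).1 (h b)).det := by
    intro y
    show (eval y) (Matrix.det _) = _
    rw [RingHom.map_det]
    congr 1
    ext a b
    simp [vecs]
  have hvanish : ∀ y ∈ realSpace n M, eval y P = 0 := by
    intro y hy
    rw [hevalP]
    by_contra hne
    have hwy : LinearIndependent ℂ (fun a : Fin k => vecs y (e a).1) :=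
      (key_li_iff _).mpr ⟨h, hinj, hne⟩
    have hSy : LinearIndependent ℂ (fun i : ↥S => vecs y i.1) := by
      have h2 := hwy.comp e.symm e.symm.injective
      have h3 : ((fun a : Fin k => vecs y (e a).1) ∘ e.symm) = fun i : ↥S => vecs y i.1 := by
        funext i; simp
      rwa [h3] at h2
    have : M.Indep S := (hy S).mp hSy
    exact hS.1 this
  have := hx P hvanish
  rw [hevalP] at this
  exact hdet this

end Aux

theorem stmt2 {d n : ℕ} (M : Matroid (Fin d)) (hE : M.E = Set.univ)
    (hrank : ∃ B : Set (Fin d), M.IsBase B ∧ B.ncard = n) :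
    circuitVariety n M =
      matroidVariety n M ∪ ⋃ N ∈ {N : Matroid (Fin d) | IsMinimalMatroid M N},
        circuitVariety n N := by
  apply Set.Subset.antisymm
  · intro x hx
    have hreal : IsRealization (vecMatroid x) x := fun S => (vecMatroid_indep x S).symm
    have hMN : depLE M (vecMatroid x) := by
      intro S hSdep
      refine ⟨?_, by rw [vecMatroid_E]; exact Set.subset_univ _⟩
      rw [vecMatroid_indep]
      exact hx S hSdep
    by_cases hNM : depLE (vecMatroid x) M
    · left
      have hMeq : M = vecMatroid x := depLE_antisymm hE (vecMatroid_E x) hMN hNM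
      intro f hf
      exact hf x (by show IsRealization M x; rw [hMeq]; exact hreal)
    · right
      obtain ⟨P, hPE, hMP, hPN, hPmin⟩ :=
        exists_min_below M (vecMatroid x) (vecMatroid_E x) ⟨hMN, hNM⟩
      rw [Set.mem_iUnion]
      refine ⟨P, Set.mem_iUnion.mpr ⟨⟨hPE, hMP, hPmin⟩, ?_⟩⟩
      intro S hSP hind
      have hSN : (vecMatroid x).Dep S := hPN S hSP
      have hni := hSN.1
      rw [vecMatroid_indep] at hni
      exact hni hind
  · intro x hx
    rcases hx with hx | hx
    · exact matroidVariety_subset_circuitVariety M hx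
    · rw [Set.mem_iUnion] at hx
      obtain ⟨N, hN⟩ := hx
      rw [Set.mem_iUnion] at hN
      obtain ⟨hNmin, hxN⟩ := hN
      intro S hS
      exact hxN S (hNmin.2.1.1 S hS)
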